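/- arXiv:1709.09000 — 2 statements merged into one kernel-verified Lean document; each statement's English description precedes it below -/
import Mathlib

section
/- In the ring ℤ⟦X⟧ of formal power series over ℤ, the power series whose E-th coefficient is Σ_{k=1}^{E-2} ⌊(E-k)/2⌋, multiplied by (1+X)·(1-X)³, equals X³. -/
open PowerSeries Finset

theorem aux_reindex (t s : ℕ) (hs : s = t + 2) :
    (∑ k ∈ Finset.Icc 1 t, (s-k)/2) = ∑ i ∈ Finset.range t, (i+2)/2 := by
  subst hs
  apply Finset.sum_nbij' (i := fun k => t - k) (j := fun i => t - i) <;>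
    simp <;> intros <;> omega

theorem aux_rec (m : ℕ) :
    (∑ i ∈ Finset.range (m+4), (i+2)/2) + 2 * (∑ i ∈ Finset.range (m+1), (i+2)/2)
      = 2 * (∑ i ∈ Finset.range (m+3), (i+2)/2) + (∑ i ∈ Finset.range m, (i+2)/2) := by
  simp only [Finset.sum_range_succ]
  omega

theorem linear_chain_gf :
    (PowerSeries.mk fun E : ℕ =>
        ((∑ k ∈ Finset.Icc 1 (E - 2), (E - k) / 2 : ℕ) : ℤ)) *
      ((1 + PowerSeries.X) * (1 - PowerSeries.X) ^ 3) =
      (PowerSeries.X : PowerSeries ℤ) ^ 3 := by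
  set f := (PowerSeries.mk fun E : ℕ =>
        ((∑ k ∈ Finset.Icc 1 (E - 2), (E - k) / 2 : ℕ) : ℤ)) with hf
  have key : f * ((1 + X) * (1 - X) ^ 3)
      = f - (f * X^1) - (f * X^1) + (f * X^3) + (f * X^3) - f * X^4 := by ring
  rw [key]
  ext n
  simp only [map_sub, map_add, coeff_mul_X_pow', coeff_X_pow, hf, coeff_mk]
  match n with
  | 0 => norm_num
  | 1 => norm_num
  | 2 => norm_num
  | 3 => norm_num [show Finset.Icc 1 1 = {1} from rfl]
  | 4 => norm_num [show Finset.Icc 1 2 = {1,2} from rfl, show Finset.Icc 1 1 = {1} from rfl]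
  | 5 => norm_num [show Finset.Icc 1 3 = {1,2,3} from rfl, show Finset.Icc 1 2 = {1,2} from rfl,
      show Finset.Icc 1 1 = {1} from rfl]
  | (m+6) =>
    rw [if_pos (show 1 ≤ m+6 by omega), if_pos (show 3 ≤ m+6 by omega),
      if_pos (show 4 ≤ m+6 by omega), if_neg (show ¬ m+6 = 3 by omega)]
    have h1 : m + 6 - 2 = m + 4 := by omega
    have h2 : m + 6 - 1 - 2 = m + 3 := by omega
    have h3 : m + 6 - 3 - 2 = m + 1 := by omega
    have h4 : m + 6 - 4 - 2 = m := by omega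
    rw [h1, h2, h3, h4,
      aux_reindex (m+4) _ (by omega), aux_reindex (m+3) _ (by omega),
      aux_reindex (m+1) _ (by omega), aux_reindex m _ (by omega)]
    have H := aux_rec m
    generalize (∑ i ∈ Finset.range (m+4), (i+2)/2) = A at H ⊢
    generalize (∑ i ∈ Finset.range (m+3), (i+2)/2) = B at H ⊢
    generalize (∑ i ∈ Finset.range (m+1), (i+2)/2) = C at H ⊢
    generalize (∑ i ∈ Finset.range m, (i+2)/2) = D at H ⊢
    omega
end

section
/- In the ring ℤ⟦X⟧ of formal power series over ℤ, the power series whose E-th coefficient is Σ_{k=2}^{E-2} (k-1)·⌊(E-k)/2⌋, multiplied by (1+X)·(1-X)⁴, equals X⁴. -/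
open PowerSeries

private lemma hb : (PowerSeries.mk fun k : ℕ => ((k - 1 : ℕ) : ℤ)) * (1 - PowerSeries.X) ^ 2
    = PowerSeries.X ^ 2 := by
  set b := PowerSeries.mk fun k : ℕ => ((k - 1 : ℕ) : ℤ) with hbdef
  have h : b * (1 - PowerSeries.X) ^ 2
      = b - b * PowerSeries.X ^ 1 - b * PowerSeries.X ^ 1 + b * PowerSeries.X ^ 2 := by ring
  rw [h]
  ext n
  simp only [map_add, map_sub, coeff_mul_X_pow', hbdef, coeff_mk, coeff_X_pow]
  split_ifs <;> omega

private lemma hc : (PowerSeries.mk fun j : ℕ => ((j / 2 : ℕ) : ℤ))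
    * ((1 + PowerSeries.X) * (1 - PowerSeries.X) ^ 2) = PowerSeries.X ^ 2 := by
  set c := PowerSeries.mk fun j : ℕ => ((j / 2 : ℕ) : ℤ) with hcdef
  have h : c * ((1 + PowerSeries.X) * (1 - PowerSeries.X) ^ 2)
      = c - c * PowerSeries.X ^ 1 - c * PowerSeries.X ^ 2 + c * PowerSeries.X ^ 3 := by ring
  rw [h]
  ext n
  simp only [map_add, map_sub, coeff_mul_X_pow', hcdef, coeff_mk, coeff_X_pow]
  split_ifs <;> omega

private lemma hconv :
    (PowerSeries.mk fun E : ℕ =>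
        ((∑ k ∈ Finset.Icc 2 (E - 2), (k - 1) * ((E - k) / 2) : ℕ) : ℤ))
    = (PowerSeries.mk fun k : ℕ => ((k - 1 : ℕ) : ℤ))
    * (PowerSeries.mk fun j : ℕ => ((j / 2 : ℕ) : ℤ)) := by
  ext E
  rw [PowerSeries.coeff_mul, Finset.Nat.sum_antidiagonal_eq_sum_range_succ_mk]
  simp only [coeff_mk]
  rw [Nat.cast_sum]
  simp only [Nat.cast_mul]
  apply Finset.sum_subset
  · intro k hk
    simp only [Finset.mem_Icc] at hk
    simp only [Finset.mem_range]
    omega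
  · intro k hk hk2
    simp only [Finset.mem_range] at hk
    simp only [Finset.mem_Icc, not_and, not_le] at hk2
    rcases le_or_gt k 1 with h1 | h1
    · have : k - 1 = 0 := by omega
      rw [this]; simp
    · have : (E - k) / 2 = 0 := by omega
      rw [this]; simp

theorem triangle_pendant_gf :
    (PowerSeries.mk fun E : ℕ =>
        ((∑ k ∈ Finset.Icc 2 (E - 2), (k - 1) * ((E - k) / 2) : ℕ) : ℤ)) *
      ((1 + PowerSeries.X) * (1 - PowerSeries.X) ^ 4) =
      (PowerSeries.X : PowerSeries ℤ) ^ 4 := by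
  rw [hconv]
  calc ((PowerSeries.mk fun k : ℕ => ((k - 1 : ℕ) : ℤ))
        * (PowerSeries.mk fun j : ℕ => ((j / 2 : ℕ) : ℤ)))
      * ((1 + PowerSeries.X) * (1 - PowerSeries.X) ^ 4)
      = ((PowerSeries.mk fun k : ℕ => ((k - 1 : ℕ) : ℤ)) * (1 - PowerSeries.X) ^ 2)
      * ((PowerSeries.mk fun j : ℕ => ((j / 2 : ℕ) : ℤ))
        * ((1 + PowerSeries.X) * (1 - PowerSeries.X) ^ 2)) := by ring
    _ = PowerSeries.X ^ 2 * PowerSeries.X ^ 2 := by rw [hb, hc]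
    _ = PowerSeries.X ^ 4 := by ring
end
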